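/- Let R be a commutative ring, let n ≥ 1 and let ξ_1, …, ξ_n ∈ R. Then ∑_{σ ∈ S_n} sgn(σ) ∏_{1 ≤ i < j ≤ n} (ξ_{σ(i)} ξ_{σ(j)} + 1 − 2 ξ_{σ(i)}) = n! · ∏_{1 ≤ i < j ≤ n} (ξ_j − ξ_i). -/

import Mathlib

open Finset


section
variable {n : ℕ} {R : Type*} [CommRing R]

private abbrev PP (n : ℕ) : Finset (Fin n × Fin n) :=
  (univ : Finset (Fin n × Fin n)).filter fun p => p.1 < p.2

private lemma prod_fiber_pow' (V : Finset (Fin n × Fin n))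
    (c : Fin n × Fin n → Fin n) (f : Fin n → R) :
    ∏ p ∈ V, f (c p) = ∏ k : Fin n, f k ^ (V.filter fun p => c p = k).card := by
  rw [Finset.prod_comp f c]
  apply Finset.prod_subset (Finset.subset_univ _)
  intro k _ hk
  have h : (V.filter fun p => c p = k) = ∅ := by
    rw [Finset.filter_eq_empty_iff]
    intro p hp hc
    exact hk (hc ▸ Finset.mem_image_of_mem c hp)
  rw [h]; simp

private lemma sum_fiber_card' (V : Finset (Fin n × Fin n)) (c : Fin n × Fin n → Fin n) :
    ∑ k : Fin n, (V.filter fun p => c p = k).card = V.card :=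
  (Finset.card_eq_sum_card_fiberwise (fun p _ => Finset.mem_univ (c p))).symm

private lemma fiber_fst_card' (k : Fin n) :
    ((PP n).filter fun p => p.1 = k).card = n - 1 - (k : ℕ) := by
  rw [← Fin.card_Ioi k]
  apply Finset.card_nbij' (fun p => p.2) (fun x => (k, x))
  · intro p hp
    simp only [Finset.mem_coe, mem_filter, mem_univ, true_and] at hp
    exact Finset.mem_Ioi.2 (hp.2 ▸ hp.1)
  · intro x hx
    simp only [Finset.mem_coe, mem_filter, mem_univ, true_and]
    exact ⟨Finset.mem_Ioi.1 hx, trivial⟩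
  · intro p hp
    simp only [Finset.mem_coe, mem_filter, mem_univ, true_and] at hp
    exact Prod.ext hp.2.symm rfl
  · intro x hx
    rfl

private lemma fiber_snd_card' (k : Fin n) :
    ((PP n).filter fun p => p.2 = k).card = (k : ℕ) := by
  rw [← Fin.card_Iio k]
  apply Finset.card_nbij' (fun p => p.1) (fun x => (x, k))
  · intro p hp
    simp only [Finset.mem_coe, mem_filter, mem_univ, true_and] at hp
    exact Finset.mem_Iio.2 (hp.2 ▸ hp.1)
  · intro x hx
    simp only [Finset.mem_coe, mem_filter, mem_univ, true_and]
    exact ⟨Finset.mem_Iio.1 hx, trivial⟩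
  · intro p hp
    simp only [Finset.mem_coe, mem_filter, mem_univ, true_and] at hp
    exact Prod.ext rfl hp.2.symm
  · intro x hx
    rfl

private lemma PP_card' : (PP n).card = ∑ k : Fin n, (k : ℕ) := by
  rw [Finset.card_eq_sum_card_fiberwise (f := fun p => p.2)
    (t := (univ : Finset (Fin n))) (fun p _ => Finset.mem_univ p.2)]
  exact Finset.sum_congr rfl fun k _ => fiber_snd_card' k

private lemma cancel_lemma' (A : Fin n → R) (α : Fin n → ℕ)
    (i j : Fin n) (hij : i ≠ j) (hα : α i = α j) :
    ∑ σ : Equiv.Perm (Fin n), ((Equiv.Perm.sign σ : ℤ) : R) * ∏ k : Fin n, A (σ k) ^ α k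
      = 0 := by
  have hswap : ∀ k, α (Equiv.swap i j k) = α k := by
    intro k
    rcases eq_or_ne k i with rfl | hki
    · rw [Equiv.swap_apply_left]; exact hα.symm
    rcases eq_or_ne k j with rfl | hkj
    · rw [Equiv.swap_apply_right]; exact hα
    · rw [Equiv.swap_apply_of_ne_of_ne hki hkj]
  apply Finset.sum_ninvolution (fun σ => σ * Equiv.swap i j)
  · intro σ
    have hsign : Equiv.Perm.sign (σ * Equiv.swap i j) = - Equiv.Perm.sign σ := by
      rw [Equiv.Perm.sign_mul, Equiv.Perm.sign_swap hij]
      simp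
    have hprod : ∏ k : Fin n, A ((σ * Equiv.swap i j) k) ^ α k
        = ∏ k : Fin n, A (σ k) ^ α k := by
      calc ∏ k : Fin n, A ((σ * Equiv.swap i j) k) ^ α k
          = ∏ k : Fin n, A (σ (Equiv.swap i j k)) ^ α (Equiv.swap i j k) := by
            refine Finset.prod_congr rfl fun k _ => ?_
            rw [hswap]
            rfl
        _ = ∏ k : Fin n, A (σ k) ^ α k :=
            Equiv.prod_comp (Equiv.swap i j) (fun k => A (σ k) ^ α k)
    rw [hsign, hprod]
    push_cast
    ring
  · intro σ hσ h
    apply hij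
    have := congrArg (σ⁻¹ * ·) h
    simpa [mul_assoc] using this
  · intro σ; exact Finset.mem_univ _
  · intro σ
    rw [mul_assoc, Equiv.swap_mul_self, mul_one]

private lemma inner_zero (A : Fin n → R) (S : Finset (Fin n × Fin n))
    (hS : S ⊆ PP n) (hne : S.Nonempty) :
    ∑ σ : Equiv.Perm (Fin n), ((Equiv.Perm.sign σ : ℤ) : R) *
      ((∏ p ∈ S, (A (σ p.1) * A (σ p.2))) *
        ∏ p ∈ PP n \ S, (A (σ p.2) - A (σ p.1))) = 0 := by
  have hexp : ∀ σ : Equiv.Perm (Fin n),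
      ∏ p ∈ PP n \ S, (A (σ p.2) - A (σ p.1))
        = ∑ T ∈ (PP n \ S).powerset,
            (∏ p ∈ T, A (σ p.2)) * ∏ p ∈ (PP n \ S) \ T, (-(A (σ p.1))) := by
    intro σ
    rw [← Finset.prod_add]
    exact Finset.prod_congr rfl fun p _ => (sub_eq_add_neg _ _)
  calc ∑ σ : Equiv.Perm (Fin n), ((Equiv.Perm.sign σ : ℤ) : R) *
      ((∏ p ∈ S, (A (σ p.1) * A (σ p.2))) *
        ∏ p ∈ PP n \ S, (A (σ p.2) - A (σ p.1)))
      = ∑ σ : Equiv.Perm (Fin n), ∑ T ∈ (PP n \ S).powerset,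
          ((Equiv.Perm.sign σ : ℤ) : R) *
            ((∏ p ∈ S, (A (σ p.1) * A (σ p.2))) *
              ((∏ p ∈ T, A (σ p.2)) * ∏ p ∈ (PP n \ S) \ T, (-(A (σ p.1))))) := by
        refine Finset.sum_congr rfl fun σ _ => ?_
        rw [hexp σ, Finset.mul_sum, Finset.mul_sum]
    _ = ∑ T ∈ (PP n \ S).powerset, ∑ σ : Equiv.Perm (Fin n),
          ((Equiv.Perm.sign σ : ℤ) : R) *
            ((∏ p ∈ S, (A (σ p.1) * A (σ p.2))) *
              ((∏ p ∈ T, A (σ p.2)) * ∏ p ∈ (PP n \ S) \ T, (-(A (σ p.1))))) :=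
        Finset.sum_comm
    _ = 0 := by
        refine Finset.sum_eq_zero fun T hT => ?_
        have hT' : T ⊆ PP n \ S := Finset.mem_powerset.1 hT
        set U : Finset (Fin n × Fin n) := (PP n \ S) \ T with hUdef
        set α : Fin n → ℕ := fun k =>
          (S.filter fun p => p.1 = k).card + (S.filter fun p => p.2 = k).card
            + (T.filter fun p => p.2 = k).card + (U.filter fun p => p.1 = k).card with hαdef
        -- monomial form
        have hmono : ∀ σ : Equiv.Perm (Fin n),
            (∏ p ∈ S, (A (σ p.1) * A (σ p.2))) *
              ((∏ p ∈ T, A (σ p.2)) * ∏ p ∈ U, (-(A (σ p.1))))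
            = (-1 : R) ^ U.card * ∏ k : Fin n, A (σ k) ^ α k := by
          intro σ
          have h1 : ∏ p ∈ S, (A (σ p.1) * A (σ p.2))
              = (∏ p ∈ S, A (σ p.1)) * ∏ p ∈ S, A (σ p.2) := Finset.prod_mul_distrib
          have h2 : ∏ p ∈ U, (-(A (σ p.1)))
              = (-1 : R) ^ U.card * ∏ p ∈ U, A (σ p.1) := by
            rw [← Finset.prod_const, ← Finset.prod_mul_distrib]
            exact Finset.prod_congr rfl fun p _ => (neg_one_mul _).symm
          rw [h1, h2,
            prod_fiber_pow' S Prod.fst (fun k => A (σ k)),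
            prod_fiber_pow' S Prod.snd (fun k => A (σ k)),
            prod_fiber_pow' T Prod.snd (fun k => A (σ k)),
            prod_fiber_pow' U Prod.fst (fun k => A (σ k))]
          have hc : ∏ k : Fin n, A (σ k) ^ α k
              = (∏ k : Fin n, A (σ k) ^ (S.filter fun p => p.1 = k).card)
                * (∏ k : Fin n, A (σ k) ^ (S.filter fun p => p.2 = k).card)
                * (∏ k : Fin n, A (σ k) ^ (T.filter fun p => p.2 = k).card)
                * (∏ k : Fin n, A (σ k) ^ (U.filter fun p => p.1 = k).card) := by
            rw [← Finset.prod_mul_distrib, ← Finset.prod_mul_distrib,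
              ← Finset.prod_mul_distrib]
            refine Finset.prod_congr rfl fun k _ => ?_
            rw [hαdef]
            rw [pow_add, pow_add, pow_add]
          rw [hc]
          ring
        -- degree facts
        have hsumα : ∑ k : Fin n, α k = S.card + S.card + T.card + U.card := by
          simp only [hαdef, Finset.sum_add_distrib, sum_fiber_card']
        have hTU : U.card + T.card = (PP n \ S).card := by
          rw [hUdef]
          exact Finset.card_sdiff_add_card_eq_card hT'
        have hPS : (PP n \ S).card + S.card = (PP n).card :=
          Finset.card_sdiff_add_card_eq_card hS
        have hbound : ∀ k, α k < n := by
          intro k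
          have hUP : U ⊆ PP n := Finset.sdiff_subset.trans Finset.sdiff_subset
          have hTP : T ⊆ PP n := hT'.trans Finset.sdiff_subset
          have hdSU : Disjoint S U :=
            (Finset.disjoint_sdiff (s := S) (t := PP n)).mono_right Finset.sdiff_subset
          have hdST : Disjoint S T :=
            (Finset.disjoint_sdiff (s := S) (t := PP n)).mono_right hT'
          have h14 : (S.filter fun p => p.1 = k).card + (U.filter fun p => p.1 = k).card
              ≤ ((PP n).filter fun p => p.1 = k).card := by
            rw [← Finset.card_union_of_disjoint (Finset.disjoint_filter_filter hdSU)]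
            apply Finset.card_le_card
            rw [← Finset.filter_union]
            exact Finset.filter_subset_filter _ (Finset.union_subset hS hUP)
          have h23 : (S.filter fun p => p.2 = k).card + (T.filter fun p => p.2 = k).card
              ≤ ((PP n).filter fun p => p.2 = k).card := by
            rw [← Finset.card_union_of_disjoint (Finset.disjoint_filter_filter hdST)]
            apply Finset.card_le_card
            rw [← Finset.filter_union]
            exact Finset.filter_subset_filter _ (Finset.union_subset hS hTP)
          have e1 := fiber_fst_card' (n := n) k
          have e2 := fiber_snd_card' (n := n) k
          have hk := k.isLt
          have hαk : α k = (S.filter fun p => p.1 = k).card + (S.filter fun p => p.2 = k).card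
              + (T.filter fun p => p.2 = k).card + (U.filter fun p => p.1 = k).card := rfl
          omega
        have hScard : 0 < S.card := Finset.card_pos.2 hne
        have hPcard := PP_card' (n := n)
        have hninj : ¬ Function.Injective α := by
          intro hinj
          have he : Function.Injective (fun k => (⟨α k, hbound k⟩ : Fin n)) := by
            intro a b h
            exact hinj (congrArg Fin.val h)
          have hbij := Finite.injective_iff_bijective.1 he
          have hsum2 : ∑ k : Fin n, α k = ∑ m : Fin n, (m : ℕ) :=
            Fintype.sum_bijective _ hbij (fun k => α k) (fun m => (m : ℕ)) (fun k => rfl)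
          omega
        rw [Function.not_injective_iff] at hninj
        obtain ⟨i, j, hije, hij⟩ := hninj
        have hzero := cancel_lemma' A α i j hij hije
        calc ∑ σ : Equiv.Perm (Fin n),
            ((Equiv.Perm.sign σ : ℤ) : R) *
              ((∏ p ∈ S, (A (σ p.1) * A (σ p.2))) *
                ((∏ p ∈ T, A (σ p.2)) * ∏ p ∈ U, (-(A (σ p.1)))))
            = (-1 : R) ^ U.card * ∑ σ : Equiv.Perm (Fin n),
                ((Equiv.Perm.sign σ : ℤ) : R) * ∏ k : Fin n, A (σ k) ^ α k := by
              rw [Finset.mul_sum]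
              refine Finset.sum_congr rfl fun σ _ => ?_
              rw [hmono σ]
              ring
          _ = 0 := by rw [hzero, mul_zero]

private lemma prod_pairs_eq' (f : Fin n × Fin n → R) :
    ∏ p ∈ PP n, f p = ∏ i : Fin n, ∏ j ∈ Ioi i, f (i, j) := by
  rw [Finset.prod_filter, Fintype.prod_prod_type]
  refine Finset.prod_congr rfl fun i _ => ?_
  rw [← Finset.prod_filter, Finset.filter_lt_eq_Ioi]

private lemma vand_sign' (A : Fin n → R) (σ : Equiv.Perm (Fin n)) :
    ∏ p ∈ PP n, (A (σ p.2) - A (σ p.1))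
      = ((Equiv.Perm.sign σ : ℤ) : R) * ∏ p ∈ PP n, (A p.2 - A p.1) := by
  rw [prod_pairs_eq', prod_pairs_eq']
  have h1 : ∏ i : Fin n, ∏ j ∈ Ioi i, (A (σ j) - A (σ i))
      = Matrix.det (Matrix.vandermonde (fun i => A (σ i))) := by
    rw [Matrix.det_vandermonde]
  have h2 : ∏ i : Fin n, ∏ j ∈ Ioi i, (A j - A i)
      = Matrix.det (Matrix.vandermonde A) := by
    rw [Matrix.det_vandermonde]
  rw [h1, h2]
  have h3 : Matrix.vandermonde (fun i => A (σ i))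
      = (Matrix.vandermonde A).submatrix σ id := by
    ext i j
    rfl
  rw [h3, Matrix.det_permute]

end

/-- Identity (B.4): for a commutative ring `R`, `n ≥ 1` and `ξ_1, …, ξ_n ∈ R`,
`∑_{σ ∈ S_n} sgn(σ) ∏_{i<j} (ξ_{σ(i)} ξ_{σ(j)} + 1 − 2 ξ_{σ(i)}) = n! ∏_{i<j} (ξ_j − ξ_i)`. -/
theorem antisymmetrized_kernel_product_eq {R : Type*} [CommRing R] (n : ℕ) (hn : 1 ≤ n)
    (ξ : Fin n → R) :
    ∑ σ : Equiv.Perm (Fin n),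
      ((Equiv.Perm.sign σ : ℤ) : R) *
        ∏ p ∈ Finset.univ.filter (fun p : Fin n × Fin n => p.1 < p.2),
          (ξ (σ p.1) * ξ (σ p.2) + 1 - 2 * ξ (σ p.1))
    = (n.factorial : R) *
        ∏ p ∈ Finset.univ.filter (fun p : Fin n × Fin n => p.1 < p.2),
          (ξ p.2 - ξ p.1) := by
  have hPP : Finset.univ.filter (fun p : Fin n × Fin n => p.1 < p.2) = PP n := rfl
  rw [hPP]
  set A : Fin n → R := fun i => ξ i - 1 with hA
  have hsq : ∀ σ : Equiv.Perm (Fin n),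
      ((Equiv.Perm.sign σ : ℤ) : R) * ((Equiv.Perm.sign σ : ℤ) : R) = 1 := by
    intro σ
    rcases Int.units_eq_one_or (Equiv.Perm.sign σ) with h | h <;> rw [h] <;> norm_num
  calc ∑ σ : Equiv.Perm (Fin n),
      ((Equiv.Perm.sign σ : ℤ) : R) *
        ∏ p ∈ PP n, (ξ (σ p.1) * ξ (σ p.2) + 1 - 2 * ξ (σ p.1))
      = ∑ σ : Equiv.Perm (Fin n), ∑ S ∈ (PP n).powerset,
          ((Equiv.Perm.sign σ : ℤ) : R) *
            ((∏ p ∈ S, (A (σ p.1) * A (σ p.2))) *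
              ∏ p ∈ PP n \ S, (A (σ p.2) - A (σ p.1))) := by
        refine Finset.sum_congr rfl fun σ _ => ?_
        rw [← Finset.mul_sum, ← Finset.prod_add]
        congr 1
        refine Finset.prod_congr rfl fun p _ => ?_
        simp only [hA]
        ring
    _ = ∑ S ∈ (PP n).powerset, ∑ σ : Equiv.Perm (Fin n),
          ((Equiv.Perm.sign σ : ℤ) : R) *
            ((∏ p ∈ S, (A (σ p.1) * A (σ p.2))) *
              ∏ p ∈ PP n \ S, (A (σ p.2) - A (σ p.1))) := Finset.sum_comm
    _ = ∑ σ : Equiv.Perm (Fin n),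
          ((Equiv.Perm.sign σ : ℤ) : R) *
            ((∏ p ∈ (∅ : Finset (Fin n × Fin n)), (A (σ p.1) * A (σ p.2))) *
              ∏ p ∈ PP n \ ∅, (A (σ p.2) - A (σ p.1))) := by
        refine Finset.sum_eq_single_of_mem ∅
          (Finset.mem_powerset.2 (Finset.empty_subset _)) ?_
        intro S hSmem hSne
        exact inner_zero A S (Finset.mem_powerset.1 hSmem)
          (Finset.nonempty_of_ne_empty hSne)
    _ = ∑ σ : Equiv.Perm (Fin n),
          (((Equiv.Perm.sign σ : ℤ) : R) * ((Equiv.Perm.sign σ : ℤ) : R)) *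
            ∏ p ∈ PP n, (A p.2 - A p.1) := by
        refine Finset.sum_congr rfl fun σ _ => ?_
        rw [Finset.prod_empty, Finset.sdiff_empty, one_mul, vand_sign' A σ]
        ring
    _ = ∑ σ : Equiv.Perm (Fin n), ∏ p ∈ PP n, (A p.2 - A p.1) := by
        refine Finset.sum_congr rfl fun σ _ => ?_
        rw [hsq σ, one_mul]
    _ = (n.factorial : R) * ∏ p ∈ PP n, (ξ p.2 - ξ p.1) := by
        rw [Finset.sum_const, Finset.card_univ, Fintype.card_perm, Fintype.card_fin,
          nsmul_eq_mul]
        congr 1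
        refine Finset.prod_congr rfl fun p _ => ?_
        simp only [hA]
        ring
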